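/- Fix a real constant Φ with 0 < Φ ≤ 1/10. There exist an integer c ≥ 1 and a threshold N₀ ∈ ℕ such that for every n ≥ N₀ the following holds. Let T : Fin n × Fin c → Fin n be a family of n·c mutually independent random variables, each uniformly distributed on Fin n (each vertex v independently picks c uniformly random targets T(v,1), …, T(v,c)). Then with probability at least 1 − 1/n, every nonempty subset S ⊆ Fin n with |S| ≤ n/2 satisfies: the number of pairs (v, j) with v ∈ S and T(v,j) ∈ S is at most (1−Φ)·c·|S|. -/

import Mathlib

open Finset

set_option maxHeartbeats 2000000
set_option maxRecDepth 8000


open Finset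

-- (s)^s ≤ 3^s * s!
lemma aux_fact_pow (s : ℕ) : (s : ℝ) ^ s ≤ 3 ^ s * (Nat.factorial s : ℝ) := by
  induction s with
  | zero => simp
  | succ k ih =>
    rcases Nat.eq_zero_or_pos k with hk | hk
    · subst hk; norm_num
    have hk0 : (0:ℝ) < k := by exact_mod_cast hk
    have h1 : ((k:ℝ) + 1) ^ k ≤ 3 * (k:ℝ) ^ k := by
      have : ((k:ℝ) + 1) = (k:ℝ) * (1 + 1/k) := by field_simp
      rw [this, mul_pow]
      have h2 : (1 + 1/(k:ℝ)) ^ k ≤ 3 := by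
        have h3 : (1 + 1/(k:ℝ)) ≤ Real.exp (1/k) := by
          have := Real.add_one_le_exp (1/(k:ℝ)); linarith
        calc (1 + 1/(k:ℝ)) ^ k ≤ (Real.exp (1/k)) ^ k := by
              apply pow_le_pow_left₀ (by positivity) h3
          _ = Real.exp 1 := by
              rw [← Real.exp_nat_mul]; congr 1; field_simp
          _ ≤ 3 := by linarith [Real.exp_one_lt_d9]
      calc (k:ℝ)^k * (1 + 1/(k:ℝ))^k ≤ (k:ℝ)^k * 3 := by
            apply mul_le_mul_of_nonneg_left h2 (by positivity)
        _ = 3 * (k:ℝ)^k := by ring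
    have h4 : ((k:ℝ) + 1) ^ (k+1) = ((k:ℝ)+1) * ((k:ℝ)+1)^k := by ring
    push_cast
    rw [h4, Nat.factorial_succ]
    push_cast
    calc ((k:ℝ)+1) * ((k:ℝ)+1)^k ≤ ((k:ℝ)+1) * (3 * (k:ℝ)^k) := by
          apply mul_le_mul_of_nonneg_left h1 (by positivity)
      _ ≤ ((k:ℝ)+1) * (3 * (3^k * (Nat.factorial k : ℝ))) := by
          apply mul_le_mul_of_nonneg_left (by apply mul_le_mul_of_nonneg_left ih (by norm_num)) (by positivity)
      _ = 3^(k+1) * (((k:ℝ)+1) * (Nat.factorial k : ℝ)) := by ring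

lemma aux_choose_le (n s : ℕ) (hs : 1 ≤ s) : (n.choose s : ℝ) ≤ (3 * n / s) ^ s := by
  have hs0 : (0:ℝ) < s := by exact_mod_cast hs
  have h1 : (n.choose s : ℝ) ≤ (n:ℝ)^s / (Nat.factorial s : ℝ) := Nat.choose_le_pow_div s n
  have hf : (0:ℝ) < (Nat.factorial s : ℝ) := by exact_mod_cast Nat.factorial_pos s
  have h2 : (n:ℝ)^s / (Nat.factorial s : ℝ) ≤ (3 * n / s) ^ s := by
    rw [div_pow, mul_pow, div_le_div_iff₀ hf (by positivity)]
    have := aux_fact_pow s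
    have hn : (0:ℝ) ≤ (n:ℝ)^s := by positivity
    calc (n:ℝ)^s * (s:ℝ)^s ≤ (n:ℝ)^s * (3^s * (Nat.factorial s : ℝ)) := by
          apply mul_le_mul_of_nonneg_left this hn
      _ = 3^s * (n:ℝ)^s * (Nat.factorial s : ℝ) := by ring
  linarith



open Finset

-- MGF identity: sum over all maps T of lam^(#inside pairs)
lemma aux_mgf (n : ℕ) (S : Finset (Fin n)) (lam : ℝ) :
    ∑ T : (Fin n × Fin 100) → Fin n,
        lam ^ (univ.filter (fun q : Fin n × Fin 100 => q.1 ∈ S ∧ T q ∈ S)).card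
      = (lam * S.card + ((n:ℝ) - S.card)) ^ (S.card * 100) * (n:ℝ) ^ ((n - S.card) * 100) := by
  have key : ∀ T : (Fin n × Fin 100) → Fin n,
      lam ^ (univ.filter (fun q : Fin n × Fin 100 => q.1 ∈ S ∧ T q ∈ S)).card
        = ∏ q : Fin n × Fin 100, (if q.1 ∈ S ∧ T q ∈ S then lam else 1) := by
    intro T
    rw [Finset.prod_ite]
    simp [Finset.prod_const]
  simp only [key]
  have step : (∑ T ∈ Fintype.piFinset (fun _ : Fin n × Fin 100 => (univ : Finset (Fin n))),
      ∏ q : Fin n × Fin 100, (if q.1 ∈ S ∧ T q ∈ S then lam else 1))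
      = ∏ q : Fin n × Fin 100, ∑ x : Fin n, (if q.1 ∈ S ∧ x ∈ S then lam else 1) :=
    (Finset.prod_univ_sum (fun _ : Fin n × Fin 100 => (univ : Finset (Fin n)))
      (fun q x => if q.1 ∈ S ∧ x ∈ S then lam else 1)).symm
  rw [Fintype.piFinset_univ] at step
  rw [step]
  have inner : ∀ q : Fin n × Fin 100, (∑ x : Fin n, (if q.1 ∈ S ∧ x ∈ S then lam else 1))
      = if q.1 ∈ S then (lam * S.card + ((n:ℝ) - S.card)) else (n:ℝ) := by
    intro q
    by_cases hq : q.1 ∈ S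
    · simp only [hq, true_and, if_true]
      rw [Finset.sum_ite]
      simp only [Finset.sum_const, nsmul_eq_mul, mul_one]
      have h1 : univ.filter (fun x : Fin n => x ∈ S) = S := by
        ext x; simp
      have h2 : (univ.filter (fun x : Fin n => ¬ x ∈ S)).card = n - S.card := by
        rw [Finset.filter_not, Finset.card_sdiff]
        simp [h1]
      rw [h1, h2]
      have hsn : S.card ≤ n := by
        simpa using Finset.card_le_card (Finset.subset_univ S)
      push_cast [hsn]
      ring
    · simp [hq]
  rw [Finset.prod_congr rfl (fun q _ => inner q)]
  rw [Finset.prod_ite]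
  simp only [Finset.prod_const]
  have hc1 : (univ.filter (fun q : Fin n × Fin 100 => q.1 ∈ S)).card = S.card * 100 := by
    have : univ.filter (fun q : Fin n × Fin 100 => q.1 ∈ S) = S ×ˢ (univ : Finset (Fin 100)) := by
      ext ⟨a, b⟩; simp
    rw [this, Finset.card_product]
    simp
  have hc2 : (univ.filter (fun q : Fin n × Fin 100 => ¬ q.1 ∈ S)).card = (n - S.card) * 100 := by
    have h3 := Finset.card_filter_add_card_filter_not
      (s := (univ : Finset (Fin n × Fin 100))) (p := fun q => q.1 ∈ S)
    have h4 : (univ : Finset (Fin n × Fin 100)).card = n * 100 := by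
      simp [Finset.card_univ]
    have hsn : S.card ≤ n := by
      simpa using Finset.card_le_card (Finset.subset_univ S)
    omega
  rw [hc1, hc2]




lemma aux_chernoff (n : ℕ) (S : Finset (Fin n)) (h1 : 1 ≤ S.card) (h2 : 2 * S.card ≤ n) :
    ((univ.filter (fun T : (Fin n × Fin 100) → Fin n =>
        90 * S.card < (univ.filter (fun q : Fin n × Fin 100 => q.1 ∈ S ∧ T q ∈ S)).card)).card : ℝ)
      ≤ (n:ℝ) ^ (n * 100) *
        ((((19:ℝ)/10 - (S.card:ℝ)/n) ^ 100 * ((10 * (S.card:ℝ)) / (9 * n)) ^ 90) ^ S.card) := by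
  set s := S.card with hs
  have hn : 1 ≤ n := by omega
  have hs0 : (0:ℝ) < s := by exact_mod_cast h1
  have hn0 : (0:ℝ) < n := by exact_mod_cast hn
  have hsn : (2:ℝ) * s ≤ n := by exact_mod_cast h2
  set lam : ℝ := (9 * n) / (10 * s) with hlam_def
  have hlam1 : (1:ℝ) ≤ lam := by
    rw [le_div_iff₀ (by positivity)]
    linarith
  have hlam0 : (0:ℝ) < lam := by linarith
  -- step 1 : card * lam^(90 s) ≤ mgf sum
  have step1 : ((univ.filter (fun T : (Fin n × Fin 100) → Fin n =>
        90 * s < (univ.filter (fun q : Fin n × Fin 100 => q.1 ∈ S ∧ T q ∈ S)).card)).card : ℝ)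
        * lam ^ (90 * s)
      ≤ ∑ T : (Fin n × Fin 100) → Fin n,
          lam ^ (univ.filter (fun q : Fin n × Fin 100 => q.1 ∈ S ∧ T q ∈ S)).card := by
    calc ((univ.filter (fun T : (Fin n × Fin 100) → Fin n =>
            90 * s < (univ.filter (fun q : Fin n × Fin 100 => q.1 ∈ S ∧ T q ∈ S)).card)).card : ℝ)
            * lam ^ (90 * s)
        = ∑ _T ∈ (univ.filter (fun T : (Fin n × Fin 100) → Fin n =>
            90 * s < (univ.filter (fun q : Fin n × Fin 100 => q.1 ∈ S ∧ T q ∈ S)).card)),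
            lam ^ (90 * s) := by rw [Finset.sum_const, nsmul_eq_mul]
      _ ≤ ∑ T ∈ (univ.filter (fun T : (Fin n × Fin 100) → Fin n =>
            90 * s < (univ.filter (fun q : Fin n × Fin 100 => q.1 ∈ S ∧ T q ∈ S)).card)),
            lam ^ (univ.filter (fun q : Fin n × Fin 100 => q.1 ∈ S ∧ T q ∈ S)).card := by
          apply Finset.sum_le_sum
          intro T hT
          rw [Finset.mem_filter] at hT
          exact pow_le_pow_right₀ hlam1 (by omega)
      _ ≤ ∑ T : (Fin n × Fin 100) → Fin n,
            lam ^ (univ.filter (fun q : Fin n × Fin 100 => q.1 ∈ S ∧ T q ∈ S)).card := by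
          apply Finset.sum_le_sum_of_subset_of_nonneg (Finset.subset_univ _)
          intro T _ _
          positivity
  -- step 2: rewrite the mgf and conclude
  rw [aux_mgf n S lam] at step1
  have e1 : lam * s + ((n:ℝ) - s) = (n:ℝ) * ((19:ℝ)/10 - (s:ℝ)/n) := by
    rw [hlam_def]; field_simp; ring
  have e2 : (lam * s + ((n:ℝ) - s)) ^ (s * 100) = (n:ℝ)^(s*100) * (((19:ℝ)/10 - (s:ℝ)/n))^(s*100) := by
    rw [e1, mul_pow]
  have hb0 : (0:ℝ) ≤ (19:ℝ)/10 - (s:ℝ)/n := by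
    have : (s:ℝ)/n ≤ 1/2 := by
      rw [div_le_iff₀ hn0]; linarith
    linarith
  have hL : ((univ.filter (fun T : (Fin n × Fin 100) → Fin n =>
        90 * s < (univ.filter (fun q : Fin n × Fin 100 => q.1 ∈ S ∧ T q ∈ S)).card)).card : ℝ)
      ≤ ((n:ℝ)^(s*100) * (((19:ℝ)/10 - (s:ℝ)/n))^(s*100) * (n:ℝ)^((n-s)*100)) / lam ^ (90*s) := by
    rw [le_div_iff₀ (by positivity)]
    rw [e2] at step1
    exact step1
  refine hL.trans (le_of_eq ?_)
  have hinv2 : lam⁻¹ = 10 * (s:ℝ) / (9 * n) := by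
    rw [hlam_def]
    rw [inv_div]
  have hpow : (n:ℝ)^(s*100) * (n:ℝ)^((n-s)*100) = (n:ℝ)^(n*100) := by
    rw [← pow_add]
    congr 1
    omega
  rw [div_eq_mul_inv, ← inv_pow, hinv2, ← hpow]
  generalize ((19:ℝ)/10 - (s:ℝ)/n) = A
  generalize (10 * (s:ℝ) / (9 * n)) = B
  ring


lemma aux_nat_pow (k : ℕ) (hk : 18 ≤ k) : (k^2 + 2*k)^2 ≤ 2^k := by
  induction k, hk using Nat.le_induction with
  | base => norm_num
  | succ k hk ih =>
    have h1 : ((k+1)^2 + 2*(k+1))^2 ≤ 2 * (k^2 + 2*k)^2 := by nlinarith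
    calc ((k+1)^2 + 2*(k+1))^2 ≤ 2 * (k^2 + 2*k)^2 := h1
      _ ≤ 2 * 2^k := by omega
      _ = 2^(k+1) := by ring

lemma aux_n_sq_le (n : ℕ) (hn : 1000 ≤ n) : n^2 ≤ 2^(Nat.sqrt n) := by
  set k := Nat.sqrt n with hk
  have hk18 : 18 ≤ k := by
    have h31 : Nat.sqrt 1000 ≤ k := Nat.sqrt_le_sqrt hn
    have : 18 ≤ Nat.sqrt 1000 := by
      have : 18 * 18 ≤ 1000 := by norm_num
      exact Nat.le_sqrt.2 (by norm_num)
    omega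
  have hnk : n ≤ k^2 + 2*k := by
    have h := Nat.lt_succ_sqrt n
    rw [← hk] at h
    nlinarith
  calc n^2 ≤ (k^2+2*k)^2 := Nat.pow_le_pow_left hnk 2
    _ ≤ 2^k := aux_nat_pow k hk18

lemma aux_y (n s : ℕ) (h1 : 1 ≤ s) (h2 : 2*s ≤ n) :
    (0:ℝ) ≤ 3 * ((19:ℝ)/10 - (s:ℝ)/n)^100 * ((10:ℝ)/9)^90 * ((s:ℝ)/n)^89
    ∧ 3 * ((19:ℝ)/10 - (s:ℝ)/n)^100 * ((10:ℝ)/9)^90 * ((s:ℝ)/n)^89 ≤ 1/2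
    ∧ 3 * ((19:ℝ)/10 - (s:ℝ)/n)^100 * ((10:ℝ)/9)^90 * ((s:ℝ)/n)^89
        ≤ (10:ℝ)^33 * ((s:ℝ)/n)^89 := by
  have hn : 1 ≤ n := by omega
  have hs0 : (0:ℝ) < s := by exact_mod_cast h1
  have hn0 : (0:ℝ) < n := by exact_mod_cast hn
  set p : ℝ := (s:ℝ)/n with hp
  have hp0 : 0 < p := by positivity
  have hp2 : p ≤ 1/2 := by
    rw [hp, div_le_iff₀ hn0]
    have : (2:ℝ) * s ≤ n := by exact_mod_cast h2
    linarith
  have hA0 : (0:ℝ) ≤ (19:ℝ)/10 - p := by linarith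
  refine ⟨by positivity, ?_, ?_⟩
  · rcases le_or_gt p (1/4) with hp4 | hp4
    · calc 3 * ((19:ℝ)/10 - p)^100 * ((10:ℝ)/9)^90 * p^89
          ≤ 3 * ((19:ℝ)/10)^100 * ((10:ℝ)/9)^90 * (1/4:ℝ)^89 := by
            gcongr <;> linarith
        _ ≤ 1/2 := by norm_num
    · calc 3 * ((19:ℝ)/10 - p)^100 * ((10:ℝ)/9)^90 * p^89
          ≤ 3 * ((33:ℝ)/20)^100 * ((10:ℝ)/9)^90 * (1/2:ℝ)^89 := by
            gcongr <;> linarith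
        _ ≤ 1/2 := by norm_num
  · calc 3 * ((19:ℝ)/10 - p)^100 * ((10:ℝ)/9)^90 * p^89
        ≤ 3 * ((19:ℝ)/10)^100 * ((10:ℝ)/9)^90 * p^89 := by gcongr <;> linarith
      _ ≤ (10:ℝ)^33 * p^89 := by
          have h : 3 * ((19:ℝ)/10)^100 * ((10:ℝ)/9)^90 ≤ (10:ℝ)^33 := by norm_num
          exact mul_le_mul_of_nonneg_right h (by positivity)



lemma aux_sum (n : ℕ) (hn : 1000 ≤ n) (y : ℕ → ℝ)
    (h0 : ∀ s ∈ Icc 1 (n/2), 0 ≤ y s)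
    (hhalf : ∀ s ∈ Icc 1 (n/2), y s ≤ 1/2)
    (hD : ∀ s ∈ Icc 1 (n/2), y s ≤ (10:ℝ)^33 * ((s:ℝ)/n)^89) :
    ∑ s ∈ Icc 1 (n/2), (y s)^s ≤ 1/(n:ℝ) := by
  have hn0 : (0:ℝ) < n := by positivity
  set t := Nat.sqrt n with ht
  rw [← Finset.sum_filter_add_sum_filter_not (Icc 1 (n/2)) (fun s => s ≤ t)]
  have part1 : ∑ s ∈ (Icc 1 (n/2)).filter (fun s => s ≤ t), (y s)^s ≤ 1/(2*(n:ℝ)) := by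
    have hbound : ∀ s ∈ (Icc 1 (n/2)).filter (fun s => s ≤ t),
        (y s)^s ≤ (10:ℝ)^33 * ((t:ℝ)/n)^89 := by
      intro s hs
      rw [mem_filter, mem_Icc] at hs
      have hs1 : 1 ≤ s := hs.1.1
      have hmem : s ∈ Icc 1 (n/2) := mem_Icc.2 ⟨hs.1.1, hs.1.2⟩
      calc (y s)^s ≤ (y s)^1 := by
            apply pow_le_pow_of_le_one (h0 s hmem) ((hhalf s hmem).trans (by norm_num)) hs1
        _ = y s := pow_one _
        _ ≤ (10:ℝ)^33 * ((s:ℝ)/n)^89 := hD s hmem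
        _ ≤ (10:ℝ)^33 * ((t:ℝ)/n)^89 := by
            gcongr
            exact_mod_cast hs.2
    calc ∑ s ∈ (Icc 1 (n/2)).filter (fun s => s ≤ t), (y s)^s
        ≤ ∑ _s ∈ (Icc 1 (n/2)).filter (fun s => s ≤ t), (10:ℝ)^33 * ((t:ℝ)/n)^89 :=
          Finset.sum_le_sum hbound
      _ = (((Icc 1 (n/2)).filter (fun s => s ≤ t)).card : ℝ) * ((10:ℝ)^33 * ((t:ℝ)/n)^89) := by
          rw [Finset.sum_const, nsmul_eq_mul]
      _ ≤ (t:ℝ) * ((10:ℝ)^33 * ((t:ℝ)/n)^89) := by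
          have hsub : (Icc 1 (n/2)).filter (fun s => s ≤ t) ⊆ Icc 1 t := by
            intro s hs
            rw [mem_filter, mem_Icc] at hs
            exact mem_Icc.2 ⟨hs.1.1, hs.2⟩
          have := Finset.card_le_card hsub
          have h2 : ((Icc 1 (n/2)).filter (fun s => s ≤ t)).card ≤ t := by
            simpa [Nat.card_Icc] using this
          apply mul_le_mul_of_nonneg_right (by exact_mod_cast h2) (by positivity)
      _ ≤ 1/(2*(n:ℝ)) := by
          have htn : ((t:ℝ))^2 ≤ n := by
            have := Nat.sqrt_le' n
            rw [← ht] at this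
            exact_mod_cast this
          have ht90 : ((t:ℝ))^89 * (t:ℝ) ≤ (n:ℝ)^45 := by
            have h1 : ((t:ℝ))^89 * (t:ℝ) = ((t:ℝ)^2)^45 := by ring
            rw [h1]
            exact pow_le_pow_left₀ (by positivity) htn 45
          have hn43 : 2 * (10:ℝ)^33 ≤ (n:ℝ)^43 := by
            have : (1000:ℝ) ≤ n := by exact_mod_cast hn
            calc 2 * (10:ℝ)^33 ≤ (1000:ℝ)^43 := by norm_num
              _ ≤ (n:ℝ)^43 := pow_le_pow_left₀ (by norm_num) this 43
          rw [le_div_iff₀ (by positivity)]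
          have hrw : (t:ℝ) * ((10:ℝ)^33 * ((t:ℝ)/n)^89) * (2*n)
              = ((10:ℝ)^33 * (t:ℝ)^89 * (t:ℝ) * (2 * n))/(n:ℝ)^89 := by
            rw [div_pow]; ring
          rw [hrw, div_le_one (by positivity)]
          calc (10:ℝ)^33 * (t:ℝ)^89 * (t:ℝ) * (2*n) ≤ (10:ℝ)^33 * (n:ℝ)^45 * (2*n) := by
                have h5 := mul_le_mul_of_nonneg_left ht90 (show (0:ℝ) ≤ (10:ℝ)^33 by positivity)
                nlinarith
            _ = (2 * (10:ℝ)^33) * (n:ℝ)^46 := by ring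
            _ ≤ (n:ℝ)^43 * (n:ℝ)^46 := by
                apply mul_le_mul_of_nonneg_right hn43 (by positivity)
            _ = (n:ℝ)^89 := by ring
  have part2 : ∑ s ∈ (Icc 1 (n/2)).filter (fun s => ¬ s ≤ t), (y s)^s ≤ 1/(2*(n:ℝ)) := by
    have hbound : ∀ s ∈ (Icc 1 (n/2)).filter (fun s => ¬ s ≤ t),
        (y s)^s ≤ (1/2:ℝ)^(t+1) := by
      intro s hs
      rw [mem_filter, mem_Icc] at hs
      have hmem : s ∈ Icc 1 (n/2) := mem_Icc.2 ⟨hs.1.1, hs.1.2⟩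
      calc (y s)^s ≤ (1/2:ℝ)^s := pow_le_pow_left₀ (h0 s hmem) (hhalf s hmem) s
        _ ≤ (1/2:ℝ)^(t+1) := by
            apply pow_le_pow_of_le_one (by norm_num) (by norm_num)
            omega
    calc ∑ s ∈ (Icc 1 (n/2)).filter (fun s => ¬ s ≤ t), (y s)^s
        ≤ ∑ _s ∈ (Icc 1 (n/2)).filter (fun s => ¬ s ≤ t), (1/2:ℝ)^(t+1) :=
          Finset.sum_le_sum hbound
      _ = (((Icc 1 (n/2)).filter (fun s => ¬ s ≤ t)).card : ℝ) * (1/2:ℝ)^(t+1) := by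
          rw [Finset.sum_const, nsmul_eq_mul]
      _ ≤ (n:ℝ) * (1/2:ℝ)^(t+1) := by
          have h2 : ((Icc 1 (n/2)).filter (fun s => ¬ s ≤ t)).card ≤ n := by
            have := Finset.card_le_card (Finset.filter_subset (fun s => ¬ s ≤ t) (Icc 1 (n/2)))
            have h3 : (Icc 1 (n/2)).card ≤ n := by
              simp only [Nat.card_Icc]
              omega
            omega
          apply mul_le_mul_of_nonneg_right (by exact_mod_cast h2) (by positivity)
      _ ≤ 1/(2*(n:ℝ)) := by
          have h4 : (n:ℝ)^2 ≤ 2^t := by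
            have := aux_n_sq_le n hn
            rw [← ht] at this
            exact_mod_cast this
          have hrw2 : (n:ℝ) * (1/2:ℝ)^(t+1) = (n:ℝ)/(2:ℝ)^(t+1) := by
            rw [one_div_pow]; ring
          rw [hrw2, div_le_div_iff₀ (by positivity) (by positivity)]
          calc (n:ℝ) * (2 * n) = 2 * (n:ℝ)^2 := by ring
            _ ≤ 2 * (2:ℝ)^t := by linarith
            _ = (2:ℝ)^(t+1) := by ring
            _ = 1 * (2:ℝ)^(t+1) := by ring
  have hfin : 1/(2*(n:ℝ)) + 1/(2*(n:ℝ)) = 1/(n:ℝ) := by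
    field_simp
    norm_num
  linarith

lemma aux_combine (n s : ℕ) (h1 : 1 ≤ s) (hn : 1 ≤ n) (A : ℝ) :
    (3*(n:ℝ)/s) * (A^100 * ((10*(s:ℝ))/(9*n))^90)
      = 3 * A^100 * ((10:ℝ)/9)^90 * ((s:ℝ)/n)^89 := by
  have hs0 : (s:ℝ) ≠ 0 := by positivity
  have hn0 : (n:ℝ) ≠ 0 := by positivity
  have e1 : (10*(s:ℝ))/(9*n) = (10/9) * ((s:ℝ)/n) := by ring
  rw [e1, mul_pow]
  have e2 : ((s:ℝ)/n)^90 = ((s:ℝ)/n)^89 * ((s:ℝ)/n) := by rw [← pow_succ]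
  rw [e2]
  field_simp





/-- Fix a real constant `Φ` with `0 < Φ ≤ 1/10`. There exist an
integer `c ≥ 1` and a threshold `N₀` such that for every `n ≥ N₀` the following holds.
Consider the uniform probability space of all maps `T : Fin n × Fin c → Fin n`
(equivalently: each vertex `v` independently picks `c` uniformly random targets
`T(v,1), …, T(v,c)`; the uniform measure on the function space is exactly the product of
`n·c` copies of the uniform distribution on `Fin n`). Then with probability at
least `1 − 1/n` — i.e. for at least a `(1 − 1/n)`-fraction of all such maps `T` — every
nonempty subset `S ⊆ Fin n` with `|S| ≤ n/2` satisfies: the number of pairs `(v, j)` with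
`v ∈ S` and `T(v,j) ∈ S` is at most `(1−Φ)·c·|S|`. -/
theorem stmt10 (Φ : ℝ) (hΦ0 : 0 < Φ) (hΦ1 : Φ ≤ 1 / 10) :
    ∃ c : ℕ, 1 ≤ c ∧ ∃ N₀ : ℕ, ∀ n : ℕ, N₀ ≤ n →
      (1 - 1 / (n : ℝ)) * (Nat.card ((Fin n × Fin c) → Fin n) : ℝ)
        ≤ (Nat.card {T : (Fin n × Fin c) → Fin n //
            ∀ S : Finset (Fin n), S.Nonempty → (S.card : ℝ) ≤ (n : ℝ) / 2 →
              ((Finset.univ.filter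
                  (fun q : Fin n × Fin c => q.1 ∈ S ∧ T q ∈ S)).card : ℝ)
                ≤ (1 - Φ) * (c : ℝ) * (S.card : ℝ)} : ℝ) := by
  classical
  refine ⟨100, by norm_num, 1000, ?_⟩
  intro n hn
  have hn1 : 1 ≤ n := by omega
  have hn0 : (0:ℝ) < n := by exact_mod_cast hn1
  set P : ((Fin n × Fin 100) → Fin n) → Prop := fun T =>
    ∀ S : Finset (Fin n), S.Nonempty → (S.card : ℝ) ≤ (n : ℝ) / 2 →
      ((Finset.univ.filter
          (fun q : Fin n × Fin 100 => q.1 ∈ S ∧ T q ∈ S)).card : ℝ)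
        ≤ (1 - Φ) * ((100:ℕ) : ℝ) * (S.card : ℝ) with hP
  have hfun : (Nat.card ((Fin n × Fin 100) → Fin n)) = n ^ (n * 100) := by
    rw [Nat.card_eq_fintype_card, Fintype.card_fun]
    simp
  have hsub : (Nat.card {T : (Fin n × Fin 100) → Fin n // P T})
      = (univ.filter P).card := by
    rw [Nat.card_eq_fintype_card, Fintype.card_subtype]
  have hsplit : (univ.filter P).card + (univ.filter (fun T => ¬ P T)).card
      = n ^ (n * 100) := by
    rw [Finset.card_filter_add_card_filter_not, Finset.card_univ, Fintype.card_fun]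
    simp
  -- it suffices to bound the bad count
  suffices hB : ((univ.filter (fun T => ¬ P T)).card : ℝ) ≤ (n:ℝ) ^ (n*100) * (1/(n:ℝ)) by
    rw [hfun, hsub]
    have h1 : ((univ.filter P).card : ℝ) = (n:ℝ)^(n*100) - ((univ.filter (fun T => ¬ P T)).card : ℝ) := by
      have h2 := congrArg (fun k : ℕ => (k:ℝ)) hsplit
      push_cast at h2
      linarith
    rw [h1]
    push_cast
    nlinarith [pow_pos hn0 (n*100)]
  -- union bound
  set Bad : Finset (Fin n) → Finset ((Fin n × Fin 100) → Fin n) := fun S =>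
    univ.filter (fun T => 90 * S.card <
      (univ.filter (fun q : Fin n × Fin 100 => q.1 ∈ S ∧ T q ∈ S)).card) with hBad
  have hsubset : univ.filter (fun T => ¬ P T) ⊆
      ((Icc 1 (n/2)).biUnion (fun s => powersetCard s (univ : Finset (Fin n)))).biUnion Bad := by
    intro T hT
    rw [mem_filter] at hT
    have hT2 := hT.2
    rw [hP] at hT2
    simp only at hT2
    push_neg at hT2
    obtain ⟨S, hS1, hS2, hS3⟩ := hT2
    have hcard2 : 2 * S.card ≤ n := by
      by_contra hcon
      push_neg at hcon
      have hcon2 : (n:ℝ) < 2 * S.card := by exact_mod_cast hcon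
      linarith
    rw [mem_biUnion]
    refine ⟨S, ?_, ?_⟩
    · rw [mem_biUnion]
      refine ⟨S.card, ?_, ?_⟩
      · rw [mem_Icc]
        constructor
        · exact Finset.card_pos.2 hS1
        · omega
      · exact Finset.mem_powersetCard_univ.2 rfl
    · rw [hBad, mem_filter]
      refine ⟨mem_univ _, ?_⟩
      have h90 : (90 : ℝ) * S.card ≤ (1 - Φ) * ((100:ℕ):ℝ) * S.card := by
        have hc0 : (0:ℝ) ≤ (S.card:ℝ) := by positivity
        have : (90 : ℝ) ≤ (1 - Φ) * 100 := by push_cast; linarith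
        push_cast
        nlinarith
      have : (90 * S.card : ℝ) <
          ((univ.filter (fun q : Fin n × Fin 100 => q.1 ∈ S ∧ T q ∈ S)).card : ℝ) := by
        linarith
      exact_mod_cast this
  have hstep1 : ((univ.filter (fun T => ¬ P T)).card : ℝ)
      ≤ ∑ s ∈ Icc 1 (n/2), ∑ S ∈ powersetCard s (univ : Finset (Fin n)), ((Bad S).card : ℝ) := by
    have h1 := Finset.card_le_card hsubset
    have h2 := Finset.card_biUnion_le (s := (Icc 1 (n/2)).biUnion
      (fun s => powersetCard s (univ : Finset (Fin n)))) (t := Bad)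
    have h3 : ∑ S ∈ (Icc 1 (n/2)).biUnion (fun s => powersetCard s (univ : Finset (Fin n))),
          (Bad S).card
        = ∑ s ∈ Icc 1 (n/2), ∑ S ∈ powersetCard s (univ : Finset (Fin n)), (Bad S).card := by
      apply Finset.sum_biUnion
      intro a ha b hb hab
      simp only [Finset.disjoint_left]
      intro S hSa hSb
      rw [Finset.mem_powersetCard_univ] at hSa hSb
      exact hab (by omega)
    calc ((univ.filter (fun T => ¬ P T)).card : ℝ)
        ≤ (((((Icc 1 (n/2)).biUnion (fun s => powersetCard s (univ : Finset (Fin n))))).biUnion Bad).card : ℝ) := by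
          exact_mod_cast h1
      _ ≤ ((∑ S ∈ (Icc 1 (n/2)).biUnion (fun s => powersetCard s (univ : Finset (Fin n))), (Bad S).card : ℕ) : ℝ) := by
          exact_mod_cast h2
      _ = _ := by rw [h3]; push_cast; rfl
  -- bound each Bad S and sum
  set y : ℕ → ℝ := fun s =>
    3 * ((19:ℝ)/10 - (s:ℝ)/n)^100 * ((10:ℝ)/9)^90 * ((s:ℝ)/n)^89 with hy
  have hstep2 : ∑ s ∈ Icc 1 (n/2), ∑ S ∈ powersetCard s (univ : Finset (Fin n)), ((Bad S).card : ℝ)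
      ≤ ∑ s ∈ Icc 1 (n/2), (n:ℝ)^(n*100) * (y s)^s := by
    apply Finset.sum_le_sum
    intro s hs
    rw [mem_Icc] at hs
    have hs1 : 1 ≤ s := hs.1
    have hs2 : 2 * s ≤ n := by
      have := hs.2
      omega
    have hcardS : ∀ S ∈ powersetCard s (univ : Finset (Fin n)), S.card = s := by
      intro S hS
      exact Finset.mem_powersetCard_univ.1 hS
    have hper : ∀ S ∈ powersetCard s (univ : Finset (Fin n)),
        ((Bad S).card : ℝ) ≤ (n:ℝ)^(n*100) *
          ((((19:ℝ)/10 - (s:ℝ)/n) ^ 100 * ((10 * (s:ℝ)) / (9 * n)) ^ 90) ^ s) := by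
      intro S hS
      have hc := hcardS S hS
      have h7 := aux_chernoff n S (by omega) (by omega)
      rw [hc] at h7
      simp only [hBad, hc]
      exact h7
    calc ∑ S ∈ powersetCard s (univ : Finset (Fin n)), ((Bad S).card : ℝ)
        ≤ ∑ _S ∈ powersetCard s (univ : Finset (Fin n)), (n:ℝ)^(n*100) *
            ((((19:ℝ)/10 - (s:ℝ)/n) ^ 100 * ((10 * (s:ℝ)) / (9 * n)) ^ 90) ^ s) :=
          Finset.sum_le_sum hper
      _ = (n.choose s : ℝ) * ((n:ℝ)^(n*100) *
            ((((19:ℝ)/10 - (s:ℝ)/n) ^ 100 * ((10 * (s:ℝ)) / (9 * n)) ^ 90) ^ s)) := by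
          rw [Finset.sum_const, nsmul_eq_mul, Finset.card_powersetCard, Finset.card_univ]
          simp
      _ ≤ (n:ℝ)^(n*100) * (y s)^s := by
          have hs0 : (0:ℝ) < s := by exact_mod_cast hs1
          have hA0 : (0:ℝ) ≤ (19:ℝ)/10 - (s:ℝ)/n := by
            have : (s:ℝ)/n ≤ 1/2 := by
              rw [div_le_iff₀ hn0]
              have : (2:ℝ)*s ≤ n := by exact_mod_cast hs2
              linarith
            linarith
          have hw0 : (0:ℝ) ≤ ((19:ℝ)/10 - (s:ℝ)/n) ^ 100 * ((10 * (s:ℝ)) / (9 * n)) ^ 90 := by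
            positivity
          have hchoose := aux_choose_le n s hs1
          have hkey : (n.choose s : ℝ) *
              ((((19:ℝ)/10 - (s:ℝ)/n) ^ 100 * ((10 * (s:ℝ)) / (9 * n)) ^ 90) ^ s)
              ≤ (y s)^s := by
            calc (n.choose s : ℝ) *
                ((((19:ℝ)/10 - (s:ℝ)/n) ^ 100 * ((10 * (s:ℝ)) / (9 * n)) ^ 90) ^ s)
                ≤ (3 * (n:ℝ) / s) ^ s *
                  ((((19:ℝ)/10 - (s:ℝ)/n) ^ 100 * ((10 * (s:ℝ)) / (9 * n)) ^ 90) ^ s) := by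
                  apply mul_le_mul_of_nonneg_right hchoose (pow_nonneg hw0 s)
              _ = ((3 * (n:ℝ) / s) *
                  (((19:ℝ)/10 - (s:ℝ)/n) ^ 100 * ((10 * (s:ℝ)) / (9 * n)) ^ 90)) ^ s :=
                  (mul_pow _ _ s).symm
              _ = (y s)^s := by
                  congr 1
                  simp only [hy]
                  exact aux_combine n s hs1 hn1 _
          calc (n.choose s : ℝ) * ((n:ℝ)^(n*100) *
                ((((19:ℝ)/10 - (s:ℝ)/n) ^ 100 * ((10 * (s:ℝ)) / (9 * n)) ^ 90) ^ s))
              = (n:ℝ)^(n*100) * ((n.choose s : ℝ) *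
                ((((19:ℝ)/10 - (s:ℝ)/n) ^ 100 * ((10 * (s:ℝ)) / (9 * n)) ^ 90) ^ s)) := by ring
            _ ≤ (n:ℝ)^(n*100) * (y s)^s := by
                apply mul_le_mul_of_nonneg_left hkey (by positivity)
  have hstep3 : ∑ s ∈ Icc 1 (n/2), (n:ℝ)^(n*100) * (y s)^s ≤ (n:ℝ)^(n*100) * (1/(n:ℝ)) := by
    rw [← Finset.mul_sum]
    apply mul_le_mul_of_nonneg_left _ (by positivity)
    apply aux_sum n hn y
    · intro s hs
      rw [mem_Icc] at hs
      exact (aux_y n s hs.1 (by omega)).1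
    · intro s hs
      rw [mem_Icc] at hs
      exact (aux_y n s hs.1 (by omega)).2.1
    · intro s hs
      rw [mem_Icc] at hs
      exact (aux_y n s hs.1 (by omega)).2.2
  linarith
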